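/- (Laver, Dehornoy) Every left-distributive algebra (A,·) can be extended and expanded to an algebra satisfying Laver's laws: there exist a set P, an injection i : A → P, and binary operations · and ∘ on P satisfying (ALΣ), such that i(a·b) = i(a)·i(b) for all a,b ∈ A. Moreover, if A is generated by a single element 1 under ·, then P is generated by i(1) under · and ∘. -/

import Mathlib

/-- Laver's laws (ALΣ) for two binary operations `mul` (`·`) and `comp` (`∘`):
`a∘(b∘c) = (a∘b)∘c`; `(a∘b)·c = a·(b·c)`; `a·(b∘c) = (a·b)∘(a·c)`;
`a∘b = (a·b)∘a`. -/
def ALSigma {α : Type*} (mul comp : α → α → α) : Prop :=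
  (∀ a b c : α, comp a (comp b c) = comp (comp a b) c) ∧
  (∀ a b c : α, mul (comp a b) c = mul a (mul b c)) ∧
  (∀ a b c : α, mul a (comp b c) = comp (mul a b) (mul a c)) ∧
  (∀ a b : α, comp a b = comp (mul a b) a)

/-- `A` is generated by `one` under the single binary operation `op`. -/
def GeneratesOne {α : Type*} (op : α → α → α) (one : α) : Prop :=
  ∀ s : Set α, one ∈ s → (∀ x ∈ s, ∀ y ∈ s, op x y ∈ s) → ∀ x : α, x ∈ s

/-- `A` is generated by `one` under the two binary operations `mul` and `comp`. -/
def GeneratesTwo {α : Type*} (mul comp : α → α → α) (one : α) : Prop :=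
  ∀ s : Set α, one ∈ s → (∀ x ∈ s, ∀ y ∈ s, mul x y ∈ s) →
    (∀ x ∈ s, ∀ y ∈ s, comp x y ∈ s) → ∀ x : α, x ∈ s

/-! Auxiliary construction: nonempty words over `A` modulo `ab ≈ (a·b)a`. -/

universe v

namespace Stmt7Aux

open Relation

variable {A : Type v} (op : A → A → A)

/-- Iterated left action of a word on an element. -/
def mdot : List A → A → A
  | [], a => a
  | x :: u, a => op x (mdot u a)

/-- One rewriting step `[a,b] → [a·b, a]` inside a word. -/
inductive Step : List A → List A → Prop
  | mk (u w : List A) (a b : A) :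
      Step (u ++ a :: b :: w) (u ++ op a b :: a :: w)

abbrev Rel : List A → List A → Prop := Relation.EqvGen (Step op)

theorem step_length {x y : List A} (h : Step op x y) : x.length = y.length := by
  cases h with
  | mk u w a b => simp

theorem rel_length {x y : List A} (h : Rel op x y) : x.length = y.length := by
  induction h with
  | rel _ _ h => exact step_length op h
  | refl => rfl
  | symm _ _ _ ih => omega
  | trans _ _ _ _ _ ih1 ih2 => omega

theorem rel_map (g : List A → List A)
    (hg : ∀ x y, Step op x y → Rel op (g x) (g y)) :
    ∀ {x y}, Rel op x y → Rel op (g x) (g y) := by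
  intro x y h
  induction h with
  | rel _ _ h => exact hg _ _ h
  | refl => exact EqvGen.refl _
  | symm _ _ _ ih => exact EqvGen.symm _ _ ih
  | trans _ _ _ _ _ ih1 ih2 => exact EqvGen.trans _ _ _ ih1 ih2

theorem rel_append_left (u : List A) {x y : List A} (h : Rel op x y) :
    Rel op (u ++ x) (u ++ y) := by
  refine rel_map op (fun l => u ++ l) ?_ h
  rintro _ _ ⟨u', w, a, b⟩
  rw [← List.append_assoc, ← List.append_assoc]
  exact EqvGen.rel _ _ (Step.mk (u ++ u') w a b)

theorem rel_append_right (u : List A) {x y : List A} (h : Rel op x y) :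
    Rel op (x ++ u) (y ++ u) := by
  refine rel_map op (fun l => l ++ u) ?_ h
  rintro _ _ ⟨u', w, a, b⟩
  simp only [List.append_assoc, List.cons_append]
  exact EqvGen.rel _ _ (Step.mk u' (w ++ u) a b)

theorem mdot_homo (hLD : ∀ a b c : A, op a (op b c) = op (op a b) (op a c))
    (u : List A) (a b : A) :
    mdot op u (op a b) = op (mdot op u a) (mdot op u b) := by
  induction u with
  | nil => rfl
  | cons x u ih =>
    simp only [mdot, ih]
    rw [hLD]

theorem mdot_step (hLD : ∀ a b c : A, op a (op b c) = op (op a b) (op a c))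
    {x y : List A} (h : Step op x y) :
    mdot op x = mdot op y := by
  cases h with
  | mk u w a b =>
    funext c
    induction u with
    | nil =>
      simp only [List.nil_append, mdot]
      exact hLD a b (mdot op w c)
    | cons z u ih => simp only [List.cons_append, mdot, List.append_eq, ih]

theorem mdot_rel (hLD : ∀ a b c : A, op a (op b c) = op (op a b) (op a c))
    {x y : List A} (h : Rel op x y) : mdot op x = mdot op y := by
  induction h with
  | rel _ _ h => exact mdot_step op hLD h
  | refl => rfl
  | symm _ _ _ ih => exact ih.symm
  | trans _ _ _ _ _ ih1 ih2 => exact ih1.trans ih2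

theorem rel_map_mdot (hLD : ∀ a b c : A, op a (op b c) = op (op a b) (op a c))
    (v : List A) {x y : List A} (h : Rel op x y) :
    Rel op (List.map (mdot op v) x) (List.map (mdot op v) y) := by
  refine rel_map op (List.map (mdot op v)) ?_ h
  rintro _ _ ⟨u', w, a, b⟩
  simp only [List.map_append, List.map_cons]
  rw [mdot_homo op hLD]
  exact EqvGen.rel _ _ (Step.mk _ _ _ _)

theorem mdot_append (u v : List A) (a : A) :
    mdot op (u ++ v) a = mdot op u (mdot op v a) := by
  induction u with
  | nil => rfl
  | cons x u ih => simp [mdot, ih]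

theorem rel_snoc (u : List A) (a : A) :
    Rel op (u ++ [a]) (mdot op u a :: u) := by
  induction u with
  | nil => exact EqvGen.refl _
  | cons x u ih =>
    have h1 : Rel op (x :: (u ++ [a])) (x :: (mdot op u a :: u)) :=
      rel_append_left op [x] ih
    have h2 : Step op ([] ++ x :: mdot op u a :: u)
        ([] ++ op x (mdot op u a) :: x :: u) := Step.mk [] u x (mdot op u a)
    exact EqvGen.trans _ _ _ h1 (EqvGen.rel _ _ h2)

theorem rel_key (v u : List A) :
    Rel op (u ++ v) (List.map (mdot op u) v ++ u) := by
  induction v generalizing u with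
  | nil => simpa using EqvGen.refl (r := Step op) u
  | cons a v ih =>
    have h1 : Rel op ((u ++ [a]) ++ v) ((mdot op u a :: u) ++ v) :=
      rel_append_right op v (rel_snoc op u a)
    have h2 : Rel op (mdot op u a :: (u ++ v))
        (mdot op u a :: (List.map (mdot op u) v ++ u)) :=
      rel_append_left op [mdot op u a] (ih u)
    have e1 : u ++ a :: v = (u ++ [a]) ++ v := by simp
    have e2 : (mdot op u a :: u) ++ v = mdot op u a :: (u ++ v) := by simp
    rw [e1]
    refine EqvGen.trans _ _ _ h1 ?_
    rw [e2]
    simpa using h2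

/-! Quotient construction. -/

def Q := Quot (Step op)

theorem sound' {x y : List A} (h : Rel op x y) :
    Quot.mk (Step op) x = Quot.mk (Step op) y := by
  induction h with
  | rel _ _ h => exact Quot.sound h
  | refl => rfl
  | symm _ _ _ ih => exact ih.symm
  | trans _ _ _ _ _ ih1 ih2 => exact ih1.trans ih2

def lenQ : Q op → ℕ :=
  Quot.lift List.length (fun _ _ h => step_length op h)

def mulQ (hLD : ∀ a b c : A, op a (op b c) = op (op a b) (op a c)) :
    Q op → Q op → Q op :=
  Quot.lift
    (fun u => Quot.lift (fun v => Quot.mk (Step op) (List.map (mdot op u) v))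
      (fun _ _ h => sound' op (rel_map_mdot op hLD u (EqvGen.rel _ _ h))))
    (fun u u' h => by
      have hm : mdot op u = mdot op u' := mdot_step op hLD h
      funext q
      induction q using Quot.ind with
      | mk v => simp only [hm]; rfl)

def compQ : Q op → Q op → Q op :=
  Quot.lift
    (fun u => Quot.lift (fun v => Quot.mk (Step op) (u ++ v))
      (fun _ _ h => sound' op (rel_append_left op u (EqvGen.rel _ _ h))))
    (fun u u' h => by
      funext q
      induction q using Quot.ind with
      | mk v => exact sound' op (rel_append_right op v (EqvGen.rel _ _ h)))

theorem lenQ_mulQ (hLD : ∀ a b c : A, op a (op b c) = op (op a b) (op a c))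
    (q r : Q op) : lenQ op (mulQ op hLD q r) = lenQ op r := by
  induction q using Quot.ind with
  | mk u =>
    induction r using Quot.ind with
    | mk v => simp [mulQ, lenQ]

theorem lenQ_compQ (q r : Q op) :
    lenQ op (compQ op q r) = lenQ op q + lenQ op r := by
  induction q using Quot.ind with
  | mk u =>
    induction r using Quot.ind with
    | mk v => simp [compQ, lenQ]


theorem rel_short {x y : List A} (h : Rel op x y) : x.length ≤ 1 → x = y := by
  induction h with
  | rel x y h =>
    intro hx
    cases h with
    | mk u w a b => simp [List.length_append] at hx; omega
  | refl => intro _; rfl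
  | symm x y h ih =>
    intro hy
    have hl := rel_length op h
    exact (ih (by omega)).symm
  | trans x y z h1 h2 ih1 ih2 =>
    intro hx
    have hl := rel_length op h1
    exact (ih1 hx).trans (ih2 (by omega))

theorem main {A : Type v} (op : A → A → A)
    (hLD : ∀ a b c : A, op a (op b c) = op (op a b) (op a c)) :
    ∃ (P : Type v) (i : A → P) (mulP compP : P → P → P),
      Function.Injective i ∧
      ((∀ a b c : P, compP a (compP b c) = compP (compP a b) c) ∧
       (∀ a b c : P, mulP (compP a b) c = mulP a (mulP b c)) ∧
       (∀ a b c : P, mulP a (compP b c) = compP (mulP a b) (mulP a c)) ∧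
       (∀ a b : P, compP a b = compP (mulP a b) a)) ∧
      (∀ a b : A, i (op a b) = mulP (i a) (i b)) ∧
      (∀ one : A, (∀ s : Set A, one ∈ s → (∀ x ∈ s, ∀ y ∈ s, op x y ∈ s) → ∀ x : A, x ∈ s) →
        (∀ s : Set P, i one ∈ s → (∀ x ∈ s, ∀ y ∈ s, mulP x y ∈ s) →
          (∀ x ∈ s, ∀ y ∈ s, compP x y ∈ s) → ∀ x : P, x ∈ s)) := by
  classical
  refine ⟨{q : Q op // lenQ op q ≠ 0},
    fun a => ⟨Quot.mk (Step op) [a], Nat.one_ne_zero⟩,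
    fun p q => ⟨mulQ op hLD p.1 q.1, by rw [lenQ_mulQ]; exact q.2⟩,
    fun p q => ⟨compQ op p.1 q.1, by rw [lenQ_compQ]; omega⟩,
    ?_, ⟨?_, ?_, ?_, ?_⟩, ?_, ?_⟩
  · -- injectivity
    intro a b h
    have h1 : Quot.mk (Step op) [a] = Quot.mk (Step op) [b] := congrArg Subtype.val h
    have h2 : Rel op [a] [b] := Quot.eqvGen_exact h1
    have h3 := rel_short op h2 (by simp)
    simpa using h3
  · -- comp assoc
    rintro ⟨q, hq⟩ ⟨r, hr⟩ ⟨s, hs⟩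
    apply Subtype.ext
    dsimp only
    induction q using Quot.ind with | mk u => ?_
    induction r using Quot.ind with | mk v => ?_
    induction s using Quot.ind with | mk w => ?_
    show Quot.mk _ (u ++ (v ++ w)) = Quot.mk _ ((u ++ v) ++ w)
    rw [List.append_assoc]
  · -- (a∘b)·c = a·(b·c)
    rintro ⟨q, hq⟩ ⟨r, hr⟩ ⟨s, hs⟩
    apply Subtype.ext
    dsimp only
    induction q using Quot.ind with | mk u => ?_
    induction r using Quot.ind with | mk v => ?_
    induction s using Quot.ind with | mk w => ?_
    show Quot.mk _ (List.map (mdot op (u ++ v)) w)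
      = Quot.mk _ (List.map (mdot op u) (List.map (mdot op v) w))
    rw [List.map_map]
    have he : mdot op (u ++ v) = mdot op u ∘ mdot op v :=
      funext (mdot_append op u v)
    rw [he]
  · -- a·(b∘c) = (a·b)∘(a·c)
    rintro ⟨q, hq⟩ ⟨r, hr⟩ ⟨s, hs⟩
    apply Subtype.ext
    dsimp only
    induction q using Quot.ind with | mk u => ?_
    induction r using Quot.ind with | mk v => ?_
    induction s using Quot.ind with | mk w => ?_
    show Quot.mk _ (List.map (mdot op u) (v ++ w))
      = Quot.mk _ (List.map (mdot op u) v ++ List.map (mdot op u) w)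
    rw [List.map_append]
  · -- a∘b = (a·b)∘a
    rintro ⟨q, hq⟩ ⟨r, hr⟩
    apply Subtype.ext
    dsimp only
    induction q using Quot.ind with | mk u => ?_
    induction r using Quot.ind with | mk v => ?_
    show Quot.mk _ (u ++ v) = Quot.mk _ (List.map (mdot op u) v ++ u)
    exact sound' op (rel_key op v u)
  · -- homomorphism
    intro a b
    rfl
  · -- generation
    intro one hgen s hone hmul hcomp
    have hA : ∀ a : A,
        (⟨Quot.mk (Step op) [a], Nat.one_ne_zero⟩ : {q : Q op // lenQ op q ≠ 0}) ∈ s := by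
      intro a
      refine hgen {a : A | (⟨Quot.mk (Step op) [a], Nat.one_ne_zero⟩ :
        {q : Q op // lenQ op q ≠ 0}) ∈ s} hone ?_ a
      intro x hx y hy
      exact hmul _ hx _ hy
    have hlist : ∀ l : List A, ∀ h : lenQ op (Quot.mk (Step op) l) ≠ 0,
        (⟨Quot.mk (Step op) l, h⟩ : {q : Q op // lenQ op q ≠ 0}) ∈ s := by
      intro l
      induction l with
      | nil => intro h; exact absurd rfl h
      | cons a l ih =>
        intro h
        cases l with
        | nil => exact hA a
        | cons b l' =>
          have h' : lenQ op (Quot.mk (Step op) (b :: l')) ≠ 0 := by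
            show (b :: l').length ≠ 0
            simp
          exact hcomp _ (hA a) _ (ih h')
    rintro ⟨q, hq⟩
    induction q using Quot.ind with | mk l => ?_
    exact hlist l hq

end Stmt7Aux


theorem stmt_7 {A : Type u} (op : A → A → A)
    (hLD : ∀ a b c : A, op a (op b c) = op (op a b) (op a c)) :
    ∃ (P : Type u) (i : A → P) (mulP compP : P → P → P),
      Function.Injective i ∧
      ALSigma mulP compP ∧
      (∀ a b : A, i (op a b) = mulP (i a) (i b)) ∧
      (∀ one : A, GeneratesOne op one → GeneratesTwo mulP compP (i one)) := by
  obtain ⟨P, i, mulP, compP, h1, h2, h3, h4⟩ := Stmt7Aux.main op hLD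
  exact ⟨P, i, mulP, compP, h1, h2, h3, fun one h => h4 one h⟩
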